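/- The standard normal hazard function λ(x) = φ(x)/(1 − Φ(x)) (equivalently, x ↦ φ(−x)/Φ(−x)) is differentiable on ℝ and its derivative lies strictly in the open interval (0, 1) at every point of ℝ. In particular, λ(x) > x for all x ∈ ℝ, i.e., φ(x) > x·(1 − Φ(x)) for all x ∈ ℝ. -/
import Mathlib

open MeasureTheory ProbabilityTheory Filter Topology Set

/-- Standard normal density. -/
noncomputable def phi (x : ℝ) : ℝ := (Real.sqrt (2 * Real.pi))⁻¹ * Real.exp (-x ^ 2 / 2)

/-- Standard normal CDF. -/
noncomputable def Phi (x : ℝ) : ℝ := ∫ s in Set.Iic x, phi s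

/-- Standard normal hazard function (inverse Mills ratio). -/
noncomputable def lam (x : ℝ) : ℝ := phi x / (1 - Phi x)

/-- Mills-ratio-type function `φ(x)/Φ(x)`. -/
noncomputable def mills (x : ℝ) : ℝ := phi x / Phi x

noncomputable def Q (x : ℝ) : ℝ := ∫ s in Set.Ioi x, phi s

lemma phi_pos (x : ℝ) : 0 < phi x := by
  have : 0 < Real.sqrt (2 * Real.pi) := Real.sqrt_pos.2 (by positivity)
  exact mul_pos (inv_pos.2 this) (Real.exp_pos _)

lemma phi_cont : Continuous phi := by
  unfold phi; fun_prop

lemma phi_eq (x : ℝ) : phi x = (Real.sqrt (2 * Real.pi))⁻¹ * Real.exp (-(1/2) * x ^ 2) := by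
  unfold phi; ring_nf

lemma phi_integrable : Integrable phi := by
  have h := (integrable_exp_neg_mul_sq (b := 1/2) (by norm_num)).const_mul
    (Real.sqrt (2 * Real.pi))⁻¹
  exact h.congr (by filter_upwards with x; rw [phi_eq])

lemma integral_phi : ∫ x, phi x = 1 := by
  have : ∫ x, phi x = (Real.sqrt (2 * Real.pi))⁻¹ * ∫ x : ℝ, Real.exp (-(1/2) * x ^ 2) := by
    rw [← integral_const_mul]; congr 1; ext x; rw [phi_eq]
  rw [this, integral_gaussian]
  rw [show Real.pi / (1/2) = 2 * Real.pi by ring]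
  rw [inv_mul_cancel₀]
  positivity

lemma hasDerivAt_phi (x : ℝ) : HasDerivAt phi (-x * phi x) x := by
  have h : HasDerivAt (fun x : ℝ => -x ^ 2 / 2) (-x) x := by
    have := ((hasDerivAt_pow 2 x).neg).div_const 2
    simpa using this.congr_deriv (by ring)
  have := (h.exp).const_mul (Real.sqrt (2 * Real.pi))⁻¹
  exact this.congr_deriv (by unfold phi; ring)

lemma hasDerivAt_Phi (x : ℝ) : HasDerivAt Phi (phi x) x := by
  have h : HasDerivAt (fun u => ∫ t in (0:ℝ)..u, phi t) (phi x) x :=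
    intervalIntegral.integral_hasDerivAt_right phi_integrable.intervalIntegrable
      (phi_cont.stronglyMeasurableAtFilter _ _) phi_cont.continuousAt
  have h2 := h.const_add (Phi 0)
  apply h2.congr_of_eventuallyEq
  filter_upwards with u
  have := intervalIntegral.integral_Iic_sub_Iic (phi_integrable.integrableOn (s := Iic 0))
    (phi_integrable.integrableOn (s := Iic u))
  show Phi u = Phi 0 + ∫ t in (0:ℝ)..u, phi t
  unfold Phi at *; linarith

lemma Q_eq (x : ℝ) : 1 - Phi x = Q x := by
  have := intervalIntegral.integral_Iic_add_Ioi (f := phi) (b := x) (μ := volume)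
    phi_integrable.integrableOn phi_integrable.integrableOn
  rw [integral_phi] at this
  unfold Phi Q; linarith

lemma Q_pos (x : ℝ) : 0 < Q x := by
  refine (setIntegral_pos_iff_support_of_nonneg_ae ?_ phi_integrable.integrableOn).2 ?_
  · filter_upwards with s using (phi_pos s).le
  · have : Function.support phi = Set.univ := by
      ext s; simp [Function.mem_support, (phi_pos s).ne']
    rw [this, Set.univ_inter]
    simp [Real.volume_Ioi]

lemma hasDerivAt_Q (x : ℝ) : HasDerivAt Q (-phi x) x := by
  have h := (hasDerivAt_Phi x).const_sub 1
  apply h.congr_of_eventuallyEq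
  filter_upwards with u using (Q_eq u).symm

lemma phi_tendsto : Tendsto phi atTop (𝓝 0) := by
  have h1 : Tendsto (fun x : ℝ => -x ^ 2 / 2) atTop atBot := by
    apply Tendsto.atBot_div_const (by norm_num)
    exact tendsto_neg_atTop_atBot.comp (tendsto_pow_atTop two_ne_zero)
  have h2 := (Real.tendsto_exp_atBot.comp h1).const_mul (Real.sqrt (2 * Real.pi))⁻¹
  rw [mul_zero] at h2
  exact h2.congr fun x => rfl

lemma x_phi_tendsto : Tendsto (fun x => x * phi x) atTop (𝓝 0) := by
  have hb := (Real.tendsto_pow_mul_exp_neg_atTop_nhds_zero 1).const_mul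
    (Real.sqrt (2 * Real.pi))⁻¹
  rw [mul_zero] at hb
  apply tendsto_of_tendsto_of_tendsto_of_le_of_le' tendsto_const_nhds hb
  · filter_upwards [eventually_ge_atTop (0:ℝ)] with x hx
    exact mul_nonneg hx (phi_pos x).le
  · filter_upwards [eventually_ge_atTop (2:ℝ)] with x hx
    have h1 : Real.exp (-x ^ 2 / 2) ≤ Real.exp (-x) := by
      apply Real.exp_le_exp.2; nlinarith
    have h2 : (0:ℝ) < (Real.sqrt (2 * Real.pi))⁻¹ := by
      have : 0 < Real.sqrt (2 * Real.pi) := Real.sqrt_pos.2 (by positivity); positivity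
    unfold phi
    calc x * ((Real.sqrt (2 * Real.pi))⁻¹ * Real.exp (-x ^ 2 / 2))
        ≤ x * ((Real.sqrt (2 * Real.pi))⁻¹ * Real.exp (-x)) := by
          apply mul_le_mul_of_nonneg_left _ (by linarith)
          exact mul_le_mul_of_nonneg_left h1 h2.le
      _ = (Real.sqrt (2 * Real.pi))⁻¹ * (x ^ 1 * Real.exp (-x)) := by ring

lemma s_phi_integrableOn (x : ℝ) : IntegrableOn (fun s => s * phi s) (Set.Ioi x) := by
  apply Integrable.integrableOn
  have h := (integrable_mul_exp_neg_mul_sq (b := 1/2) (by norm_num)).const_mul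
    (Real.sqrt (2 * Real.pi))⁻¹
  apply h.congr
  filter_upwards with s
  rw [phi_eq]; ring

lemma integral_s_phi (x : ℝ) : ∫ s in Set.Ioi x, s * phi s = phi x := by
  have hderiv : ∀ s ∈ Set.Ici x, HasDerivAt (fun u => -phi u) (s * phi s) s := by
    intro s _
    exact (hasDerivAt_phi s).neg.congr_deriv (by ring)
  have := MeasureTheory.integral_Ioi_of_hasDerivAt_of_tendsto' hderiv
    (s_phi_integrableOn x) (phi_tendsto.neg)
  simpa using this

lemma xQ_lt_phi (x : ℝ) : x * Q x < phi x := by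
  rcases lt_or_ge x 0 with hx | hx
  · nlinarith [phi_pos x, Q_pos x]
  · have h1 : IntegrableOn (fun s => x * phi s) (Set.Ioi x) :=
      (phi_integrable.integrableOn).const_mul x
    have key : ∫ s in Set.Ioi x, (s - x) * phi s = phi x - x * Q x := by
      have h2 := integral_sub (s_phi_integrableOn x) h1
      rw [integral_s_phi, integral_const_mul] at h2
      calc ∫ s in Set.Ioi x, (s - x) * phi s
          = ∫ s in Set.Ioi x, (s * phi s - x * phi s) := by congr 1; ext s; ring
        _ = phi x - x * Q x := h2
    have hpos : 0 < ∫ s in Set.Ioi x, (s - x) * phi s := by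
      refine (setIntegral_pos_iff_support_of_nonneg_ae ?_ ?_).2 ?_
      · rw [EventuallyLE, ae_restrict_iff' measurableSet_Ioi]
        filter_upwards with s hs
        exact mul_nonneg (by simp only [mem_Ioi] at hs; linarith) (phi_pos s).le
      · refine ((s_phi_integrableOn x).sub h1).congr ?_
        filter_upwards with s
        show s * phi s - x * phi s = _
        ring
      · have hsub : Set.Ioi x ⊆ Function.support (fun s => (s - x) * phi s) ∩ Set.Ioi x := by
          intro s hs
          refine ⟨?_, hs⟩
          simp only [Function.mem_support]
          have : 0 < s - x := by simp only [mem_Ioi] at hs; linarith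
          exact (mul_pos this (phi_pos s)).ne'
        calc (0:ENNReal) < volume (Set.Ioi x) := by simp [Real.volume_Ioi]
          _ ≤ _ := measure_mono hsub
    rw [key] at hpos; linarith

lemma Q_tendsto : Tendsto Q atTop (𝓝 0) := by
  apply tendsto_of_tendsto_of_tendsto_of_le_of_le' tendsto_const_nhds phi_tendsto
  · filter_upwards with y using (Q_pos y).le
  · filter_upwards [eventually_ge_atTop (1:ℝ)] with y hy
    nlinarith [xQ_lt_phi y, Q_pos y]

lemma x2Q_tendsto : Tendsto (fun x => x ^ 2 * Q x) atTop (𝓝 0) := by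
  apply tendsto_of_tendsto_of_tendsto_of_le_of_le' tendsto_const_nhds x_phi_tendsto
  · filter_upwards with y using mul_nonneg (sq_nonneg y) (Q_pos y).le
  · filter_upwards [eventually_gt_atTop (0:ℝ)] with y hy
    nlinarith [xQ_lt_phi y]

lemma pos_of_deriv_neg_tendsto_zero {g g' : ℝ → ℝ} (hd : ∀ x, HasDerivAt g (g' x) x)
    (hneg : ∀ x, g' x < 0) (hlim : Tendsto g atTop (𝓝 0)) : ∀ x, 0 < g x := by
  have hanti : StrictAnti g := strictAnti_of_deriv_neg fun x => by
    rw [(hd x).deriv]; exact hneg x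
  intro x
  have h1 : 0 ≤ g (x + 1) := by
    apply le_of_tendsto hlim
    filter_upwards [eventually_ge_atTop (x + 1)] with y hy
    exact hanti.antitone hy
  calc (0:ℝ) ≤ g (x + 1) := h1
    _ < g x := hanti (by linarith)

lemma g_pos : ∀ x : ℝ, 0 < (1 + x ^ 2) * Q x - x * phi x := by
  apply pos_of_deriv_neg_tendsto_zero (g' := fun x => 2 * (x * Q x - phi x))
  · intro x
    have h1 : HasDerivAt (fun y => (1 + y ^ 2) * Q y)
        ((2 * x) * Q x + (1 + x ^ 2) * (-phi x)) x := by
      have := ((hasDerivAt_pow 2 x).const_add 1).mul (hasDerivAt_Q x)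
      exact this.congr_deriv (by push_cast; ring)
    have h2 : HasDerivAt (fun y => y * phi y) (1 * phi x + x * (-x * phi x)) x :=
      (hasDerivAt_id x).mul (hasDerivAt_phi x)
    exact (h1.sub h2).congr_deriv (by ring)
  · intro x
    have := xQ_lt_phi x; linarith
  · have := (Q_tendsto.add x2Q_tendsto).sub x_phi_tendsto
    rw [add_zero, sub_zero] at this
    exact this.congr fun x => by ring

lemma h_pos : ∀ x : ℝ, 0 < Q x ^ 2 - phi x ^ 2 + x * phi x * Q x := by
  apply pos_of_deriv_neg_tendsto_zero
    (g' := fun x => -phi x * ((1 + x ^ 2) * Q x - x * phi x))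
  · intro x
    have h1 : HasDerivAt (fun y => Q y ^ 2) (2 * Q x * (-phi x)) x := by
      have := (hasDerivAt_Q x).pow 2
      exact this.congr_deriv (by push_cast; ring)
    have h2 : HasDerivAt (fun y => phi y ^ 2) (2 * phi x * (-x * phi x)) x := by
      have := (hasDerivAt_phi x).pow 2
      exact this.congr_deriv (by push_cast; ring)
    have hxphi : HasDerivAt (fun y => y * phi y) (1 * phi x + x * (-x * phi x)) x :=
      (hasDerivAt_id x).mul (hasDerivAt_phi x)
    have h3 : HasDerivAt (fun y => y * phi y * Q y)
        ((1 * phi x + x * (-x * phi x)) * Q x + (x * phi x) * (-phi x)) x :=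
      hxphi.mul (hasDerivAt_Q x)
    exact ((h1.sub h2).add h3).congr_deriv (by ring)
  · intro x
    exact mul_neg_of_neg_of_pos (neg_lt_zero.2 (phi_pos x)) (g_pos x)
  · have h1 := Q_tendsto.mul Q_tendsto
    have h2 := phi_tendsto.mul phi_tendsto
    have h3 := x_phi_tendsto.mul Q_tendsto
    have := (h1.sub h2).add h3
    rw [mul_zero, sub_zero, add_zero] at this
    exact this.congr fun x => by ring

lemma hasDerivAt_lam (x : ℝ) :
    HasDerivAt lam ((-x * phi x * (1 - Phi x) - phi x * (-phi x)) / (1 - Phi x) ^ 2) x := by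
  have hne : (1 - Phi x) ≠ 0 := by rw [Q_eq]; exact (Q_pos x).ne'
  exact (hasDerivAt_phi x).div ((hasDerivAt_Phi x).const_sub 1) hne

lemma deriv_lam_mem (x : ℝ) :
    (-x * phi x * (1 - Phi x) - phi x * (-phi x)) / (1 - Phi x) ^ 2 ∈ Set.Ioo (0:ℝ) 1 := by
  rw [Q_eq]
  have hQ := Q_pos x
  have hφ := phi_pos x
  have hlow := xQ_lt_phi x
  have hh := h_pos x
  constructor
  · apply div_pos; nlinarith; positivity
  · rw [div_lt_one (by positivity)]
    nlinarith

/-- the standard normal hazard `λ(x) = φ(x)/(1 − Φ(x))` is differentiable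
with derivative strictly in `(0, 1)`; in particular `λ(x) > x`, i.e. `φ(x) > x·(1 − Φ(x))`. -/
theorem stmt_14 :
    (∀ x : ℝ, DifferentiableAt ℝ lam x ∧ deriv lam x ∈ Set.Ioo (0 : ℝ) 1) ∧
    (∀ x : ℝ, x < lam x) ∧ (∀ x : ℝ, x * (1 - Phi x) < phi x) := by
  have hQ : ∀ x : ℝ, x * (1 - Phi x) < phi x := by
    intro x; rw [Q_eq]; exact xQ_lt_phi x
  refine ⟨fun x => ?_, fun x => ?_, hQ⟩
  · refine ⟨(hasDerivAt_lam x).differentiableAt, ?_⟩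
    rw [(hasDerivAt_lam x).deriv]
    exact deriv_lam_mem x
  · have h1 : 0 < 1 - Phi x := by rw [Q_eq]; exact Q_pos x
    rw [lam, lt_div_iff₀ h1]
    exact hQ x
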